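/- The simplicial Hausdorff distance for filtered complexes satisfies the triangle inequality: for all filtered complexes (X,f), (Y,g), (Z,h), δ̂((X,f),(Z,h)) ≤ δ̂((X,f),(Y,g)) + δ̂((Y,g),(Z,h)). -/
import Mathlib


open scoped ENNReal

/-- A finite abstract simplicial complex on a finite vertex set. -/
structure SComplex (V : Type*) [DecidableEq V] where
  vertices : Finset V
  simplices : Finset (Finset V)
  nonempty_mem : ∀ σ ∈ simplices, σ.Nonempty
  subset_vertices : ∀ σ ∈ simplices, σ ⊆ vertices
  down_closed : ∀ σ ∈ simplices, ∀ τ, τ ⊆ σ → τ.Nonempty → τ ∈ simplices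
  singleton_mem : ∀ v ∈ vertices, ({v} : Finset V) ∈ simplices

/-- `(X,f)` is `ε`-close to `(Y,g)`: for every `k` and every `k`-simplex `σ` of `X`
there is a `k`-simplex `τ` of `Y` such that every vertex of `σ` is within `ε`
of some vertex of `τ`. -/
def IsEpsClose {V W : Type*} [DecidableEq V] [DecidableEq W] {d : ℕ}
    (X : SComplex V) (f : V → EuclideanSpace ℝ (Fin d))
    (Y : SComplex W) (g : W → EuclideanSpace ℝ (Fin d)) (ε : ℝ) : Prop :=
  ∀ σ ∈ X.simplices, ∃ τ ∈ Y.simplices, τ.card = σ.card ∧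
    ∀ v ∈ σ, ∃ w ∈ τ, dist (f v) (g w) < ε

/-- Directed simplicial Hausdorff distance, valued in `[0,∞]`. -/
noncomputable def dirDist {V W : Type*} [DecidableEq V] [DecidableEq W] {d : ℕ}
    (X : SComplex V) (f : V → EuclideanSpace ℝ (Fin d))
    (Y : SComplex W) (g : W → EuclideanSpace ℝ (Fin d)) : ℝ≥0∞ :=
  sInf (ENNReal.ofReal '' {ε : ℝ | 0 < ε ∧ IsEpsClose X f Y g ε})

/-- The simplicial Hausdorff distance. -/
noncomputable def sDelta {V W : Type*} [DecidableEq V] [DecidableEq W] {d : ℕ}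
    (X : SComplex V) (f : V → EuclideanSpace ℝ (Fin d))
    (Y : SComplex W) (g : W → EuclideanSpace ℝ (Fin d)) : ℝ≥0∞ :=
  max (dirDist X f Y g) (dirDist Y g X f)

/-- A filtered complex: a family of finite abstract simplicial complexes on a common
vertex set, indexed by `α > 0`, monotone in the index. -/
structure FilteredComplex (V : Type*) [DecidableEq V] where
  vertices : Finset V
  cplx : ℝ → SComplex V
  vertices_eq : ∀ α : ℝ, 0 < α → (cplx α).vertices = vertices
  mono : ∀ α β : ℝ, 0 < α → α ≤ β → (cplx α).simplices ⊆ (cplx β).simplices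

/-- Directed simplicial Hausdorff distance between filtered complexes:
the supremum over `α > 0` of the directed distances at each filtration level. -/
noncomputable def filtDirDist {V W : Type*} [DecidableEq V] [DecidableEq W] {d : ℕ}
    (X : FilteredComplex V) (f : V → EuclideanSpace ℝ (Fin d))
    (Y : FilteredComplex W) (g : W → EuclideanSpace ℝ (Fin d)) : ℝ≥0∞ :=
  ⨆ (α : ℝ) (_ : 0 < α), dirDist (X.cplx α) f (Y.cplx α) g

/-- The simplicial Hausdorff distance between filtered complexes. -/
noncomputable def filtDelta {V W : Type*} [DecidableEq V] [DecidableEq W] {d : ℕ}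
    (X : FilteredComplex V) (f : V → EuclideanSpace ℝ (Fin d))
    (Y : FilteredComplex W) (g : W → EuclideanSpace ℝ (Fin d)) : ℝ≥0∞ :=
  max (filtDirDist X f Y g) (filtDirDist Y g X f)


lemma isEpsClose_trans {V W U : Type*} [DecidableEq V] [DecidableEq W] [DecidableEq U] {d : ℕ}
    {X : SComplex V} {f : V → EuclideanSpace ℝ (Fin d)}
    {Y : SComplex W} {g : W → EuclideanSpace ℝ (Fin d)}
    {Z : SComplex U} {h : U → EuclideanSpace ℝ (Fin d)} {ε₁ ε₂ : ℝ}
    (h1 : IsEpsClose X f Y g ε₁) (h2 : IsEpsClose Y g Z h ε₂) :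
    IsEpsClose X f Z h (ε₁ + ε₂) := by
  intro σ hσ
  obtain ⟨τ, hτ, hc, hv⟩ := h1 σ hσ
  obtain ⟨ρ, hρ, hc', hw⟩ := h2 τ hτ
  refine ⟨ρ, hρ, by rw [hc', hc], fun v hv' => ?_⟩
  obtain ⟨w, hw', hd1⟩ := hv v hv'
  obtain ⟨u, hu, hd2⟩ := hw w hw'
  exact ⟨u, hu, lt_of_le_of_lt (dist_triangle _ (g w) _) (by linarith)⟩

lemma dirDist_triangle' {V W U : Type*} [DecidableEq V] [DecidableEq W] [DecidableEq U] {d : ℕ}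
    (X : SComplex V) (f : V → EuclideanSpace ℝ (Fin d))
    (Y : SComplex W) (g : W → EuclideanSpace ℝ (Fin d))
    (Z : SComplex U) (h : U → EuclideanSpace ℝ (Fin d)) :
    dirDist X f Z h ≤ dirDist X f Y g + dirDist Y g Z h := by
  by_cases h1 : dirDist X f Y g = ⊤
  · simp [h1]
  by_cases h2 : dirDist Y g Z h = ⊤
  · simp [h2]
  refine ENNReal.le_of_forall_pos_le_add fun η hη hfin => ?_
  have hη2 : (0 : ℝ) < η / 2 := by positivity
  have l1 : dirDist X f Y g < dirDist X f Y g + ENNReal.ofReal (η / 2) :=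
    ENNReal.lt_add_right h1 (by simp [hη2])
  have l2 : dirDist Y g Z h < dirDist Y g Z h + ENNReal.ofReal (η / 2) :=
    ENNReal.lt_add_right h2 (by simp [hη2])
  obtain ⟨a, ha, hal⟩ := sInf_lt_iff.mp l1
  obtain ⟨b, hb, hbl⟩ := sInf_lt_iff.mp l2
  obtain ⟨ε₁, ⟨hε₁, hc₁⟩, rfl⟩ := ha
  obtain ⟨ε₂, ⟨hε₂, hc₂⟩, rfl⟩ := hb
  have hmem : ENNReal.ofReal (ε₁ + ε₂) ∈
      ENNReal.ofReal '' {ε : ℝ | 0 < ε ∧ IsEpsClose X f Z h ε} :=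
    ⟨ε₁ + ε₂, ⟨by linarith, isEpsClose_trans hc₁ hc₂⟩, rfl⟩
  calc dirDist X f Z h ≤ ENNReal.ofReal (ε₁ + ε₂) := sInf_le hmem
    _ = ENNReal.ofReal ε₁ + ENNReal.ofReal ε₂ := ENNReal.ofReal_add hε₁.le hε₂.le
    _ ≤ (dirDist X f Y g + ENNReal.ofReal (η / 2)) +
        (dirDist Y g Z h + ENNReal.ofReal (η / 2)) := add_le_add hal.le hbl.le
    _ = dirDist X f Y g + dirDist Y g Z h +
        (ENNReal.ofReal (η / 2) + ENNReal.ofReal (η / 2)) := by ring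
    _ ≤ dirDist X f Y g + dirDist Y g Z h + η := by
        gcongr
        rw [← ENNReal.ofReal_add hη2.le hη2.le]
        simp only [add_halves]
        exact ENNReal.ofReal_coe_nnreal.le

lemma filtDirDist_triangle' {V W U : Type*} [DecidableEq V] [DecidableEq W] [DecidableEq U]
    {d : ℕ}
    (X : FilteredComplex V) (f : V → EuclideanSpace ℝ (Fin d))
    (Y : FilteredComplex W) (g : W → EuclideanSpace ℝ (Fin d))
    (Z : FilteredComplex U) (h : U → EuclideanSpace ℝ (Fin d)) :
    filtDirDist X f Z h ≤ filtDirDist X f Y g + filtDirDist Y g Z h := by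
  refine iSup₂_le fun α hα => ?_
  calc dirDist (X.cplx α) f (Z.cplx α) h
      ≤ dirDist (X.cplx α) f (Y.cplx α) g + dirDist (Y.cplx α) g (Z.cplx α) h :=
        dirDist_triangle' _ _ _ _ _ _
    _ ≤ filtDirDist X f Y g + filtDirDist Y g Z h :=
        add_le_add (le_iSup₂ (f := fun α _ => dirDist (X.cplx α) f (Y.cplx α) g) α hα)
          (le_iSup₂ (f := fun α _ => dirDist (Y.cplx α) g (Z.cplx α) h) α hα)

/-- the simplicial Hausdorff distance for filtered complexes satisfies the
triangle inequality. -/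
theorem filtDelta_triangle {V W U : Type*} [DecidableEq V] [DecidableEq W] [DecidableEq U]
    {d : ℕ}
    (X : FilteredComplex V) (f : V → EuclideanSpace ℝ (Fin d))
    (Y : FilteredComplex W) (g : W → EuclideanSpace ℝ (Fin d))
    (Z : FilteredComplex U) (h : U → EuclideanSpace ℝ (Fin d))
    (hf : Set.InjOn f ↑X.vertices) (hg : Set.InjOn g ↑Y.vertices)
    (hh : Set.InjOn h ↑Z.vertices) :
    filtDelta X f Z h ≤ filtDelta X f Y g + filtDelta Y g Z h := by
  unfold filtDelta
  refine max_le ?_ ?_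
  · exact (filtDirDist_triangle' X f Y g Z h).trans
      (add_le_add (le_max_left _ _) (le_max_left _ _))
  · exact (filtDirDist_triangle' Z h Y g X f).trans
      (by rw [add_comm]; exact add_le_add (le_max_right _ _) (le_max_right _ _))
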